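/- Let f : ℚ → ℚ be the approximate squaring map f(x) = x·⌈x⌉, where ⌈x⌉ is the least integer ≥ x. Let l ≥ 1 be an integer and let m be the exponent of the highest power of 2 dividing l (i.e., m is the 2-adic valuation of l). Starting from x₀ = (2l+1)/2, the (m+1)-st iterate f^[m+1](x₀) is an integer, while f^[j](x₀) is not an integer for any 0 ≤ j ≤ m. In other words, iteration of approximate squaring starting from (2l+1)/2 first reaches an integer after exactly m+1 steps. -/
import Mathlib


/-- The approximate squaring map `x ↦ x ⌈x⌉` on the rationals. -/
def approxSq (x : ℚ) : ℚ := x * (⌈x⌉ : ℚ)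

lemma ceil_half (k : ℕ) : ⌈((2 * (k : ℚ) + 1) / 2)⌉ = (k : ℤ) + 1 := by
  rw [Int.ceil_eq_iff]
  constructor <;> push_cast <;> rw [show (2 * (k : ℚ) + 1) / 2 = k + 1/2 by ring] <;> linarith

lemma approxSq_half (k : ℕ) :
    approxSq ((2 * (k : ℚ) + 1) / 2) = (2 * (k : ℚ) + 1) * ((k : ℚ) + 1) / 2 := by
  unfold approxSq
  rw [ceil_half]
  push_cast
  ring

lemma half_not_int (k : ℕ) : ¬ ∃ z : ℤ, ((2 * (k : ℚ) + 1) / 2) = (z : ℚ) := by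
  rintro ⟨z, hz⟩
  have h1 : (2 * (k : ℚ) + 1) = 2 * z := by
    field_simp at hz; linarith
  have h2 : (2 * (k : ℤ) + 1) = 2 * z := by exact_mod_cast h1
  omega

lemma key : ∀ m k : ℕ, 1 ≤ k → padicValNat 2 k = m →
    (∃ z : ℤ, approxSq^[m + 1] ((2 * (k : ℚ) + 1) / 2) = (z : ℚ)) ∧
      ∀ j : ℕ, j ≤ m → ¬ ∃ z : ℤ, approxSq^[j] ((2 * (k : ℚ) + 1) / 2) = (z : ℚ) := by
  intro m
  induction m with
  | zero =>
    intro k hk hm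
    have hodd : ¬ 2 ∣ k := by
      rcases (padicValNat.eq_zero_iff).mp hm with h | h | h
      · omega
      · omega
      · exact h
    obtain ⟨t, ht⟩ : ∃ t, k + 1 = 2 * t := ⟨(k+1)/2, by omega⟩
    constructor
    · refine ⟨(2 * k + 1) * t, ?_⟩
      rw [Function.iterate_one, approxSq_half]
      have : ((k : ℚ) + 1) = 2 * t := by exact_mod_cast congrArg (Nat.cast (R := ℚ)) ht
      rw [this]
      push_cast
      ring
    · intro j hj
      interval_cases j
      exact half_not_int k
  | succ m ih =>
    intro k hk hm
    haveI : Fact (Nat.Prime 2) := ⟨Nat.prime_two⟩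
    have hdvd : 2 ∣ k := by
      by_contra h
      rw [padicValNat.eq_zero_of_not_dvd h] at hm
      omega
    obtain ⟨t, htk⟩ := hdvd
    have ht1 : 1 ≤ t := by omega
    have hvt : padicValNat 2 t = m := by
      have := padicValNat.mul (p := 2) (two_ne_zero) (by omega : t ≠ 0)
      rw [← htk, padicValNat.self (by norm_num), hm] at this
      omega
    set k' := t * (2 * k + 3) with hk'
    have hk'1 : 1 ≤ k' := by rw [hk']; exact Nat.mul_pos ht1 (by omega)
    have hvk' : padicValNat 2 k' = m := by
      rw [hk', padicValNat.mul (by omega) (by omega), hvt,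
        padicValNat.eq_zero_of_not_dvd (by omega)]
      omega
    have hstep : approxSq ((2 * (k : ℚ) + 1) / 2) = (2 * (k' : ℚ) + 1) / 2 := by
      rw [approxSq_half]
      have : (2 * (k' : ℚ) + 1) = (2 * (k : ℚ) + 1) * ((k : ℚ) + 1) := by
        have : (k : ℚ) = 2 * t := by exact_mod_cast congrArg (Nat.cast (R := ℚ)) htk
        rw [hk']
        push_cast
        rw [this]
        ring
      rw [this]
    obtain ⟨hint, hnon⟩ := ih k' hk'1 hvk'
    constructor
    · obtain ⟨z, hz⟩ := hint
      refine ⟨z, ?_⟩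
      rw [show m + 1 + 1 = (m + 1) + 1 from rfl, Function.iterate_succ_apply, hstep]
      exact hz
    · intro j hj
      cases j with
      | zero => exact half_not_int k
      | succ j' =>
        rw [Function.iterate_succ_apply, hstep]
        exact hnon j' (by omega)

theorem approxSq_half_integer_steps (l : ℕ) (hl : 1 ≤ l) :
    let m := padicValNat 2 l
    let x₀ : ℚ := (2 * l + 1) / 2
    (∃ z : ℤ, approxSq^[m + 1] x₀ = (z : ℚ)) ∧
      ∀ j : ℕ, j ≤ m → ¬ ∃ z : ℤ, approxSq^[j] x₀ = (z : ℚ) := by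
  exact key (padicValNat 2 l) l hl rfl
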